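/- For every κ ∈ (0,1] and all nonzero integers k, m with |k| ≠ |m| and k + m ≠ 0 ≠ k − m, the quantity J_{k,m}(δ) := (k+m)·e^{−((k+m)² + m²)δ} + (k−m)·e^{−((k−m)² + m²)δ} satisfies |J_{k,m}(δ)| ≤ C·e^{−c(m² + (k+m)²)δ}·|k|^ε·(|m| + |k+m|)^{1−ε} for all δ > 0 and every ε ∈ [0,1], where c, C > 0 are constants independent of k, m, δ. -/
import Mathlib

private lemma exp_sub_exp_le {A B δ : ℝ} (hδ : 0 ≤ δ) (hAB : A ≤ B) :
    |Real.exp (-A*δ) - Real.exp (-B*δ)| ≤ (B-A)*δ*Real.exp (-A*δ) := by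
  have h1 : Real.exp (-B*δ) ≤ Real.exp (-A*δ) :=
    Real.exp_le_exp.mpr (by nlinarith)
  rw [abs_of_nonneg (by linarith)]
  have h2 : Real.exp (-B*δ) = Real.exp (-A*δ) * Real.exp (-(B-A)*δ) := by
    rw [← Real.exp_add]; ring_nf
  have h3 : 1 - (B-A)*δ ≤ Real.exp (-(B-A)*δ) := by
    have := Real.add_one_le_exp (-(B-A)*δ); linarith
  have hE : 0 < Real.exp (-A*δ) := Real.exp_pos _
  rw [h2]
  nlinarith [mul_le_mul_of_nonneg_left h3 hE.le]

set_option maxHeartbeats 1000000 in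
theorem stmt_8 :
    ∃ c C : ℝ, 0 < c ∧ 0 < C ∧
      ∀ κ : ℝ, κ ∈ Set.Ioc (0 : ℝ) 1 →
      ∀ k m : ℤ, k ≠ 0 → m ≠ 0 → |k| ≠ |m| → k + m ≠ 0 → k - m ≠ 0 →
      ∀ δ : ℝ, 0 < δ → ∀ ε : ℝ, ε ∈ Set.Icc (0 : ℝ) 1 →
        |((k : ℝ) + m) * Real.exp (-(((k : ℝ) + m) ^ 2 + (m : ℝ) ^ 2) * δ)
          + ((k : ℝ) - m) * Real.exp (-(((k : ℝ) - m) ^ 2 + (m : ℝ) ^ 2) * δ)|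
          ≤ C * Real.exp (-c * ((m : ℝ) ^ 2 + ((k : ℝ) + m) ^ 2) * δ)
              * |(k : ℝ)| ^ ε * (|(m : ℝ)| + |(k : ℝ) + m|) ^ (1 - ε) := by
  refine ⟨1/24, 34, by norm_num, by norm_num, ?_⟩
  intro κ hκ k m hk hm _ _ _ δ hδ ε hε
  set x : ℝ := (k : ℝ) with hxdef
  set y : ℝ := (m : ℝ) with hydef
  have hx1 : (1:ℝ) ≤ |x| := by
    have h2 : ((1:ℤ):ℝ) ≤ ((|k|:ℤ):ℝ) := by exact_mod_cast Int.one_le_abs hk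
    simpa [Int.cast_abs] using h2
  have hy1 : (1:ℝ) ≤ |y| := by
    have h2 : ((1:ℤ):ℝ) ≤ ((|m|:ℤ):ℝ) := by exact_mod_cast Int.one_le_abs hm
    simpa [Int.cast_abs] using h2
  clear_value x y
  clear hk hm hκ
  set A : ℝ := (x+y)^2 + y^2 with hAdef
  set B : ℝ := (x-y)^2 + y^2 with hBdef
  set q : ℝ := x^2 + y^2 with hqdef
  have hq2 : (2:ℝ) ≤ q := by
    have h1 : (1:ℝ) ≤ x^2 := by nlinarith [sq_abs x]
    have h2 : (1:ℝ) ≤ y^2 := by nlinarith [sq_abs y]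
    rw [hqdef]; linarith
  have hq0 : (0:ℝ) < q := by linarith
  have hA4 : q/4 ≤ A := by rw [hAdef, hqdef]; nlinarith [sq_nonneg (3*x+4*y)]
  have hB4 : q/4 ≤ B := by rw [hBdef, hqdef]; nlinarith [sq_nonneg (3*x-4*y)]
  have hS3 : A ≤ 3*q := by rw [hAdef, hqdef]; nlinarith [sq_nonneg (x-y)]
  have hBA : B - A = -(4*x*y) := by rw [hAdef, hBdef]; ring
  have hy2q : |y| ^ 2 ≤ q := by rw [sq_abs, hqdef]; nlinarith [sq_nonneg x]
  have hSA : y^2 + (x+y)^2 = A := by rw [hAdef]; ring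
  rw [hSA]
  set E : ℝ := Real.exp (-(1/24) * A * δ) with hEdef
  set R : ℝ := Real.exp (-(q/8)*δ) with hRdef
  set P1 : ℝ := Real.exp (-A*δ) with hP1def
  set P2 : ℝ := Real.exp (-B*δ) with hP2def
  have hE0 : 0 < E := Real.exp_pos _
  have hR0 : 0 < R := Real.exp_pos _
  have hP10 : 0 < P1 := Real.exp_pos _
  have hP20 : 0 < P2 := Real.exp_pos _
  have hcA : (1/24) * A + q/8 ≤ A := by linarith
  have hcB : (1/24) * A + q/8 ≤ B := by linarith
  have hP1E : P1 ≤ E := by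
    rw [hP1def, hEdef]
    exact Real.exp_le_exp.mpr (by nlinarith [mul_le_mul_of_nonneg_right hcA hδ.le])
  have hP2E : P2 ≤ E := by
    rw [hP2def, hEdef]
    exact Real.exp_le_exp.mpr (by nlinarith [mul_le_mul_of_nonneg_right hcB hδ.le])
  have hP1dec : P1 ≤ E * R := by
    rw [hP1def, hEdef, hRdef, ← Real.exp_add]
    exact Real.exp_le_exp.mpr (by nlinarith [mul_le_mul_of_nonneg_right hcA hδ.le])
  have hP2dec : P2 ≤ E * R := by
    rw [hP2def, hEdef, hRdef, ← Real.exp_add]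
    exact Real.exp_le_exp.mpr (by nlinarith [mul_le_mul_of_nonneg_right hcB hδ.le])
  have hdec : δ * R ≤ 8/q := by
    have h1 : (q/8)*δ + 1 ≤ Real.exp ((q/8)*δ) := Real.add_one_le_exp _
    have h3 : 0 < Real.exp ((q/8)*δ) := Real.exp_pos _
    have h2 : R = (Real.exp ((q/8)*δ))⁻¹ := by rw [hRdef, ← Real.exp_neg]; ring_nf
    have h5 : (0:ℝ) < (Real.exp ((q/8)*δ))⁻¹ := by positivity
    have h4 : (Real.exp ((q/8)*δ))⁻¹ * Real.exp ((q/8)*δ) = 1 := inv_mul_cancel₀ h3.ne'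
    have h6 := mul_le_mul_of_nonneg_right h1 h5.le
    rw [h2, le_div_iff₀ hq0]
    nlinarith [h6, h4, h5.le, hδ.le]
  have hd1 : A ≤ B → |P1 - P2| ≤ (B-A)*δ*P1 := by
    intro h; rw [hP1def, hP2def]; exact exp_sub_exp_le hδ.le h
  have hd2 : B ≤ A → |P2 - P1| ≤ (A-B)*δ*P2 := by
    intro h; rw [hP1def, hP2def]; exact exp_sub_exp_le hδ.le h
  clear_value A B q E R P1 P2
  clear hAdef hBdef hqdef hEdef hRdef hP1def hP2def hSA
  -- difference bound
  have hxy : x*y ≤ |x| * |y| ∧ -(x*y) ≤ |x| * |y| := by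
    constructor
    · calc x*y ≤ |x*y| := le_abs_self _
        _ = |x| * |y| := abs_mul x y
    · calc -(x*y) ≤ |x*y| := neg_le_abs _
        _ = |x| * |y| := abs_mul x y
  have hdiff : |P1 - P2| ≤ 4 * |x| * |y| * δ * (E * R) := by
    rcases le_total A B with h | h
    · have h0 := hd1 h
      have habs : B - A ≤ 4 * (|x| * |y|) := by rw [hBA]; linarith [hxy.2]
      have h1 : (B-A)*δ*P1 ≤ (4 * (|x| * |y|))*δ*P1 :=
        mul_le_mul_of_nonneg_right (mul_le_mul_of_nonneg_right habs hδ.le) hP10.le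
      have h2 : (4 * (|x| * |y|))*δ*P1 ≤ (4 * (|x| * |y|))*δ*(E * R) :=
        mul_le_mul_of_nonneg_left hP1dec (by positivity)
      calc |P1 - P2| ≤ (B-A)*δ*P1 := h0
        _ ≤ (4 * (|x| * |y|))*δ*(E*R) := le_trans h1 h2
        _ = 4 * |x| * |y| * δ * (E * R) := by ring
    · have h0 := hd2 h
      have habs : A - B ≤ 4 * (|x| * |y|) := by
        have : A - B = 4*x*y := by linarith [hBA]
        rw [this]; linarith [hxy.1]
      have h1 : (A-B)*δ*P2 ≤ (4 * (|x| * |y|))*δ*P2 :=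
        mul_le_mul_of_nonneg_right (mul_le_mul_of_nonneg_right habs hδ.le) hP20.le
      have h2 : (4 * (|x| * |y|))*δ*P2 ≤ (4 * (|x| * |y|))*δ*(E * R) :=
        mul_le_mul_of_nonneg_left hP2dec (by positivity)
      calc |P1 - P2| = |P2 - P1| := abs_sub_comm _ _
        _ ≤ (A-B)*δ*P2 := h0
        _ ≤ (4 * (|x| * |y|))*δ*(E*R) := le_trans h1 h2
        _ = 4 * |x| * |y| * δ * (E * R) := by ring
  set J : ℝ := (x+y)*P1 + (x-y)*P2 with hJdef
  -- bound 1 : |J| ≤ 34 |x| E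
  have hbound1 : |J| ≤ 34 * |x| * E := by
    have h1 : |J| ≤ |x| * (P1+P2) + |y| * |P1-P2| := by
      have hid : J = x*(P1+P2) + y*(P1-P2) := by rw [hJdef]; ring
      rw [hid]
      calc |x*(P1+P2) + y*(P1-P2)| ≤ |x*(P1+P2)| + |y*(P1-P2)| := abs_add_le _ _
        _ = |x| * |P1+P2| + |y| * |P1-P2| := by rw [abs_mul, abs_mul]
        _ ≤ |x| * (P1+P2) + |y| * |P1-P2| := by
            rw [abs_of_pos (by linarith : 0 < P1+P2)]
    have h2 : |x| * (P1+P2) ≤ 2 * |x| * E := by nlinarith [abs_nonneg x]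
    have h3 : |y| * |P1-P2| ≤ 32 * |x| * E := by
      have h4 : |y| * |P1-P2| ≤ |y| * (4 * |x| * |y| * δ * (E * R)) :=
        mul_le_mul_of_nonneg_left hdiff (abs_nonneg y)
      have h6 : 4 * |x| * |y| ^ 2 * E * (δ * R) ≤ 4 * |x| * |y| ^ 2 * E * (8/q) :=
        mul_le_mul_of_nonneg_left hdec (by positivity)
      have hle1 : |y| ^ 2 / q ≤ 1 := by rw [div_le_one hq0]; exact hy2q
      have h9 : 32 * |x| * E * (|y| ^ 2 / q) ≤ 32 * |x| * E * 1 :=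
        mul_le_mul_of_nonneg_left hle1 (by positivity)
      calc |y| * |P1-P2| ≤ |y| * (4 * |x| * |y| * δ * (E * R)) := h4
        _ = 4 * |x| * |y| ^ 2 * E * (δ * R) := by ring
        _ ≤ 4 * |x| * |y| ^ 2 * E * (8/q) := h6
        _ = 32 * |x| * E * (|y| ^ 2 / q) := by ring
        _ ≤ 32 * |x| * E * 1 := h9
        _ = 32 * |x| * E := by ring
    calc |J| ≤ |x| * (P1+P2) + |y| * |P1-P2| := h1
      _ ≤ 2 * |x| * E + 32 * |x| * E := add_le_add h2 h3
      _ = 34 * |x| * E := by ring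
  -- bound 2 : |J| ≤ 34 (|y|+|x+y|) E
  have hbound2 : |J| ≤ 34 * (|y| + |x+y|) * E := by
    have h1 : |J| ≤ |x+y| * P1 + |x-y| * P2 := by
      calc |J| ≤ |(x+y)*P1| + |(x-y)*P2| := abs_add_le _ _
        _ = |x+y| * P1 + |x-y| * P2 := by
            rw [abs_mul, abs_mul, abs_of_pos hP10, abs_of_pos hP20]
    have h2 : |x-y| ≤ |x+y| + 2 * |y| := by
      have he : x - y = (x+y) + (-2)*y := by ring
      rw [he]
      calc |(x+y) + (-2)*y| ≤ |x+y| + |(-2)*y| := abs_add_le _ _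
        _ = |x+y| + 2 * |y| := by rw [abs_mul]; norm_num
    have h3 : |x+y| * P1 ≤ |x+y| * E := mul_le_mul_of_nonneg_left hP1E (abs_nonneg _)
    have h4 : |x-y| * P2 ≤ (|x+y| + 2 * |y|) * E := by
      calc |x-y| * P2 ≤ |x-y| * E := mul_le_mul_of_nonneg_left hP2E (abs_nonneg _)
        _ ≤ (|x+y| + 2 * |y|) * E := mul_le_mul_of_nonneg_right h2 hE0.le
    calc |J| ≤ |x+y| * P1 + |x-y| * P2 := h1
      _ ≤ |x+y| * E + (|x+y| + 2 * |y|) * E := add_le_add h3 h4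
      _ ≤ 34 * (|y| + |x+y|) * E := by nlinarith [abs_nonneg (x+y), abs_nonneg y, hE0.le]
  -- combine via min and rpow
  set X : ℝ := |x| with hXdef
  set Y : ℝ := |y| + |x+y| with hYdef
  have hX0 : 0 < X := by rw [hXdef]; linarith
  have hY0 : 0 < Y := by rw [hYdef]; positivity
  set W : ℝ := min X Y with hWdef
  have hW0 : 0 < W := lt_min hX0 hY0
  have hJW : |J| ≤ 34 * W * E := by
    rcases min_cases X Y with ⟨h, _⟩ | ⟨h, _⟩
    · rw [hWdef, h]; exact hbound1
    · rw [hWdef, h]; exact hbound2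
  have hWXY : W ≤ X ^ ε * Y ^ (1-ε) := by
    have h1 : W ^ ε ≤ X ^ ε := Real.rpow_le_rpow hW0.le (min_le_left _ _) hε.1
    have h2 : W ^ (1-ε) ≤ Y ^ (1-ε) :=
      Real.rpow_le_rpow hW0.le (min_le_right _ _) (by linarith [hε.2])
    have h3 : W = W ^ ε * W ^ (1-ε) := by
      rw [← Real.rpow_add hW0]; norm_num
    have hWε : 0 ≤ W ^ ε := Real.rpow_nonneg hW0.le _
    have hXε : 0 ≤ X ^ ε := Real.rpow_nonneg hX0.le _
    have hW1ε : 0 ≤ W ^ (1-ε) := Real.rpow_nonneg hW0.le _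
    calc W = W ^ ε * W ^ (1-ε) := h3
      _ ≤ X ^ ε * Y ^ (1-ε) := by nlinarith
  calc |J| ≤ 34 * W * E := hJW
    _ = 34 * E * W := by ring
    _ ≤ 34 * E * (X ^ ε * Y ^ (1-ε)) :=
        mul_le_mul_of_nonneg_left hWXY (by positivity)
    _ = 34 * E * X ^ ε * Y ^ (1-ε) := by ring
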